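/- Let E be a finite-dimensional real vector space and F ⊆ E a ℚ-vector subspace that is dense in E. For any x in E \ F and any neighborhood U of x, there exist finitely many vectors β₁,...,β_p in F ∩ U and positive reals λ₁,...,λ_p such that x = Σᵢ λᵢβᵢ, the family (β₁,...,β_p) is linearly independent over ℚ, and the family (λ₁,...,λ_p) is linearly independent over ℚ. -/

import Mathlib

open Finset

private lemma sum_equivFin' {α : Type*} {M : Type*} [AddCommMonoid M]
    (T : Finset α) (f : α → M) :
    (∑ j : Fin T.card, f (T.equivFin.symm j)) = ∑ i ∈ T, f i := by
  rw [← Finset.sum_coe_sort T f]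
  exact Fintype.sum_equiv T.equivFin.symm (fun j => f (T.equivFin.symm j)) (fun i => f i)
    (fun j => rfl)

set_option maxHeartbeats 4000000 in
theorem rational_decomposition
    {E : Type*} [NormedAddCommGroup E] [NormedSpace ℝ E] [FiniteDimensional ℝ E]
    (F : Set E) (hF0 : (0 : E) ∈ F)
    (hFadd : ∀ x ∈ F, ∀ y ∈ F, x + y ∈ F)
    (hFsmul : ∀ (q : ℚ), ∀ x ∈ F, (q : ℝ) • x ∈ F)
    (hFdense : Dense F)
    (x : E) (hx : x ∉ F) (U : Set E) (hU : U ∈ nhds x) :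
    ∃ (p : ℕ) (β : Fin p → E) (lam : Fin p → ℝ),
      (∀ i, β i ∈ F ∩ U) ∧ (∀ i, 0 < lam i) ∧
      x = ∑ i, lam i • β i ∧
      (∀ q : Fin p → ℚ, (∑ i, (q i : ℝ) • β i) = 0 → q = 0) ∧
      (∀ q : Fin p → ℚ, (∑ i, (q i : ℝ) * lam i) = 0 → q = 0) := by
  classical
  have hx0 : x ≠ 0 := fun h => hx (h ▸ hF0)
  obtain ⟨ε, hε, hball⟩ : ∃ ε > 0, Metric.ball x ε ⊆ U := Metric.mem_nhds_iff.mp hU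
  -- F is closed under finite sums
  have hFsum : ∀ (n : ℕ) (g : Fin n → E), (∀ i, g i ∈ F) → (∑ i, g i) ∈ F := by
    intro n
    induction n with
    | zero => intro g _; simpa using hF0
    | succ m ih =>
      intro g hg
      rw [Fin.sum_univ_succ]
      exact hFadd _ (hg 0) _ (ih _ fun i => hg i.succ)
  -- negation
  have hFneg : ∀ y ∈ F, -y ∈ F := by
    intro y hy
    have := hFsmul (-1) y hy
    simpa using this
  -- representations
  set Rep : ℕ → Prop := fun n => ∃ (β : Fin n → E) (lam : Fin n → ℝ),
    (∀ i, β i ∈ F) ∧ (∀ i, 0 < lam i) ∧ x = ∑ i, lam i • β i with hRepdef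
  -- existence of some representation
  have hex : ∃ n, Rep n := by
    have hspan : x ∈ Submodule.span ℝ F := by
      have hclosed : IsClosed ((Submodule.span ℝ F : Submodule ℝ E) : Set E) :=
        Submodule.closed_of_finiteDimensional _
      have h1 : closure F ⊆ (Submodule.span ℝ F : Set E) := by
        rw [← hclosed.closure_eq]
        exact closure_mono Submodule.subset_span
      exact h1 (hFdense x)
    obtain ⟨c, hcsupp, hcsum⟩ := Submodule.mem_span_set.mp hspan
    set T : Finset E := c.support with hT
    refine ⟨T.card, fun j => if 0 < c (T.equivFin.symm j) then ((T.equivFin.symm j : E))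
      else -(T.equivFin.symm j : E), fun j => |c (T.equivFin.symm j)|, ?_, ?_, ?_⟩
    · intro j
      have hmem : ((T.equivFin.symm j : E)) ∈ F := hcsupp (T.equivFin.symm j).2
      by_cases h : 0 < c (T.equivFin.symm j)
      · simpa [h] using hmem
      · simpa [h] using hFneg _ hmem
    · intro j
      have : c (T.equivFin.symm j) ≠ 0 := Finsupp.mem_support_iff.mp (T.equivFin.symm j).2
      exact abs_pos.mpr this
    · have key : ∀ j : Fin T.card,
        |c ((T.equivFin.symm j : E))| • (if 0 < c (T.equivFin.symm j)
          then ((T.equivFin.symm j : E)) else -(T.equivFin.symm j : E))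
          = c ((T.equivFin.symm j : E)) • ((T.equivFin.symm j : E)) := by
        intro j
        by_cases h : 0 < c (T.equivFin.symm j)
        · rw [if_pos h, abs_of_pos h]
        · rw [if_neg h, abs_of_nonpos (le_of_not_gt h), smul_neg, neg_smul, neg_neg]
      calc x = c.sum fun m r => r • m := hcsum.symm
        _ = ∑ i ∈ T, c i • i := rfl
        _ = ∑ j : Fin T.card, c ((T.equivFin.symm j : E)) • ((T.equivFin.symm j : E)) :=
            (sum_equivFin' T (fun i => c i • i)).symm
        _ = _ := by
            refine Finset.sum_congr rfl fun j _ => ?_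
            exact (key j).symm
  -- minimal representation
  obtain ⟨p, hRepp, hminp⟩ : ∃ p, Rep p ∧ ∀ m, m < p → ¬ Rep m :=
    ⟨Nat.find hex, Nat.find_spec hex, fun m hm => Nat.find_min hex hm⟩
  obtain ⟨β, lam, hβF, hlampos, hsum⟩ := hRepp
  have hppos : 0 < p := by
    rcases Nat.eq_zero_or_pos p with h | h
    · subst h
      exact absurd (by simpa using hsum) hx0
    · exact h
  -- β is Q-linearly independent
  have Qβ : ∀ q : Fin p → ℚ, (∑ i, (q i : ℝ) • β i) = 0 → q = 0 := by
    intro q hq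
    by_contra hqne
    -- get a relation with some positive coordinate
    obtain ⟨q', hq'rel, i₁, hi₁⟩ : ∃ q' : Fin p → ℚ,
        (∑ i, ((q' i : ℝ)) • β i) = 0 ∧ ∃ i, 0 < q' i := by
      obtain ⟨i, hi⟩ : ∃ i, q i ≠ 0 := by
        by_contra h
        push_neg at h
        exact hqne (funext h)
      rcases lt_or_gt_of_ne hi with h | h
      · refine ⟨fun i => -q i, ?_, i, by simpa using h⟩
        have : ∑ i, ((-q i : ℚ) : ℝ) • β i = -∑ i, ((q i : ℝ)) • β i := by
          rw [← Finset.sum_neg_distrib]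
          refine Finset.sum_congr rfl fun j _ => ?_
          push_cast
          rw [neg_smul]
        rw [this, hq, neg_zero]
      · exact ⟨q, hq, i, h⟩
    set Tpos : Finset (Fin p) := univ.filter (fun i => 0 < q' i) with hTpos
    have hTne : Tpos.Nonempty := ⟨i₁, by simp [hTpos, hi₁]⟩
    obtain ⟨i₀, hi₀T, hi₀min⟩ := Tpos.exists_min_image (fun i => lam i / (q' i : ℝ)) hTne
    have hi₀pos : 0 < (q' i₀ : ℝ) := by
      have := (Finset.mem_filter.mp hi₀T).2
      exact_mod_cast this
    set s : ℝ := lam i₀ / (q' i₀ : ℝ) with hs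
    have hspos : 0 < s := div_pos (hlampos i₀) hi₀pos
    have hnonneg : ∀ i, 0 ≤ lam i - s * (q' i : ℝ) := by
      intro i
      by_cases h : 0 < q' i
      · have hiT : i ∈ Tpos := by simp [hTpos, h]
        have hle : s ≤ lam i / (q' i : ℝ) := hi₀min i hiT
        have hqi : 0 < (q' i : ℝ) := by exact_mod_cast h
        have := (div_le_div_iff₀ hqi hqi).mp (le_refl (lam i / (q' i : ℝ)))
        nlinarith [mul_le_mul_of_nonneg_right hle (le_of_lt hqi),
          div_mul_cancel₀ (lam i) (ne_of_gt hqi)]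
      · have hqi : (q' i : ℝ) ≤ 0 := by
          have : q' i ≤ 0 := le_of_not_gt h
          exact_mod_cast this
        nlinarith [hlampos i]
    have hzero : lam i₀ - s * (q' i₀ : ℝ) = 0 := by
      rw [hs, div_mul_cancel₀ _ (ne_of_gt hi₀pos), sub_self]
    have hsum' : x = ∑ i, (lam i - s * (q' i : ℝ)) • β i := by
      have : ∑ i, (lam i - s * (q' i : ℝ)) • β i
          = (∑ i, lam i • β i) - s • ∑ i, ((q' i : ℝ)) • β i := by
        rw [Finset.smul_sum, ← Finset.sum_sub_distrib]
        refine Finset.sum_congr rfl fun j _ => ?_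
        rw [sub_smul, smul_smul]
      rw [this, hq'rel, smul_zero, sub_zero, hsum]
    set Tp : Finset (Fin p) := univ.filter (fun i => 0 < lam i - s * (q' i : ℝ)) with hTp
    have hi₀notin : i₀ ∉ Tp := by
      simp only [hTp, Finset.mem_filter]
      intro h
      exact absurd hzero (ne_of_gt h.2)
    have hcard : Tp.card < p := by
      have h1 : Tp ⊆ univ.erase i₀ := by
        intro a ha
        rw [Finset.mem_erase]
        exact ⟨fun h => hi₀notin (h ▸ ha), Finset.mem_univ a⟩
      calc Tp.card ≤ (univ.erase i₀).card := Finset.card_le_card h1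
        _ < univ.card := Finset.card_erase_lt_of_mem (Finset.mem_univ i₀)
        _ = p := by simp
    refine hminp Tp.card hcard ?_
    refine ⟨fun j => β (Tp.equivFin.symm j),
      fun j => lam (Tp.equivFin.symm j) - s * (q' (Tp.equivFin.symm j) : ℝ), ?_, ?_, ?_⟩
    · intro j; exact hβF _
    · intro j
      exact (Finset.mem_filter.mp (Tp.equivFin.symm j).2).2
    · calc x = ∑ i, (lam i - s * (q' i : ℝ)) • β i := hsum'
        _ = ∑ i ∈ Tp, (lam i - s * (q' i : ℝ)) • β i := by
            symm
            refine Finset.sum_subset (Finset.subset_univ _) ?_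
            intro i _ hiT
            have h0 : ¬ (0 < lam i - s * (q' i : ℝ)) := by
              intro h
              exact hiT (Finset.mem_filter.mpr ⟨Finset.mem_univ i, h⟩)
            have : lam i - s * (q' i : ℝ) = 0 := le_antisymm (le_of_not_gt h0) (hnonneg i)
            rw [this, zero_smul]
        _ = _ := (sum_equivFin' Tp (fun i => (lam i - s * (q' i : ℝ)) • β i)).symm
  -- lam is Q-linearly independent
  have Qlam : ∀ q : Fin p → ℚ, (∑ i, (q i : ℝ) * lam i) = 0 → q = 0 := by
    intro q hq
    by_contra hqne
    obtain ⟨i₀, hi₀⟩ : ∃ i, q i ≠ 0 := by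
      by_contra h
      push_neg at h
      exact hqne (funext h)
    set T : Finset (Fin p) := univ.erase i₀ with hT
    have hcard : T.card < p := by
      calc T.card < univ.card := Finset.card_erase_lt_of_mem (Finset.mem_univ i₀)
        _ = p := by simp
    refine hminp T.card hcard ?_
    have hq0 : (q i₀ : ℝ) ≠ 0 := by exact_mod_cast hi₀
    refine ⟨fun j => β (T.equivFin.symm j)
        - (((q (T.equivFin.symm j) / q i₀ : ℚ) : ℝ)) • β i₀,
      fun j => lam (T.equivFin.symm j), ?_, ?_, ?_⟩
    · intro j
      have h1 := hFadd _ (hβF (T.equivFin.symm j)) _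
        (hFsmul (-(q (T.equivFin.symm j) / q i₀)) _ (hβF i₀))
      convert h1 using 1
      push_cast
      module
    · intro j; exact hlampos _
    · have hTsum : ∀ f : Fin p → E, (∑ j : Fin T.card, f (T.equivFin.symm j)) = ∑ i ∈ T, f i :=
        fun f => sum_equivFin' T f
      have step1 : ∑ j : Fin T.card, lam (T.equivFin.symm j) •
          (β (T.equivFin.symm j) - (((q (T.equivFin.symm j) / q i₀ : ℚ) : ℝ)) • β i₀)
          = ∑ i ∈ T, lam i • (β i - (((q i / q i₀ : ℚ) : ℝ)) • β i₀) :=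
        hTsum (fun i => lam i • (β i - (((q i / q i₀ : ℚ) : ℝ)) • β i₀))
      rw [step1]
      have step2 : ∑ i ∈ T, lam i • (β i - (((q i / q i₀ : ℚ) : ℝ)) • β i₀)
          = (∑ i ∈ T, lam i • β i) - (∑ i ∈ T, lam i * ((q i : ℝ) / (q i₀ : ℝ))) • β i₀ := by
        rw [Finset.sum_smul, ← Finset.sum_sub_distrib]
        refine Finset.sum_congr rfl fun i _ => ?_
        rw [smul_sub, smul_smul]
        push_cast
        ring_nf
      rw [step2]
      have hsumT : (∑ i ∈ T, lam i • β i) = x - lam i₀ • β i₀ := by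
        have := Finset.sum_erase_add univ (fun i => lam i • β i) (Finset.mem_univ i₀)
        rw [hT]
        rw [← this] at hsum
        rw [eq_comm, sub_eq_iff_eq_add, hsum]
      have hsumq : (∑ i ∈ T, lam i * ((q i : ℝ) / (q i₀ : ℝ))) = -lam i₀ := by
        have h1 : ∑ i ∈ T, lam i * ((q i : ℝ) / (q i₀ : ℝ))
            = (∑ i ∈ T, (q i : ℝ) * lam i) / (q i₀ : ℝ) := by
          rw [Finset.sum_div]
          refine Finset.sum_congr rfl fun i _ => by ring
        have h2 : (∑ i ∈ T, (q i : ℝ) * lam i) = -((q i₀ : ℝ) * lam i₀) := by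
          have htot : (∑ i ∈ T, (q i : ℝ) * lam i) + (q i₀ : ℝ) * lam i₀ = 0 := by
            rw [← hq]
            exact Finset.sum_erase_add univ (fun i => (q i : ℝ) * lam i) (Finset.mem_univ i₀)
          linarith
        rw [h1, h2]
        field_simp
      rw [hsumT, hsumq]
      module
  -- the transformation into U
  have hpR : (0:ℝ) < (p:ℝ) := by exact_mod_cast hppos
  haveI : Nonempty (Fin p) := ⟨⟨0, hppos⟩⟩
  set M : ℝ := ∑ i, lam i * ‖β i‖ with hM
  have hM0 : 0 ≤ M :=
    Finset.sum_nonneg fun i _ => mul_nonneg (le_of_lt (hlampos i)) (norm_nonneg _)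
  set δ : ℝ := min (1/2) (ε / (4 * (M + 1))) with hδ
  have hδ0 : 0 < δ := lt_min (by norm_num) (div_pos hε (by linarith))
  have hδhalf : δ ≤ 1/2 := min_le_left _ _
  have hδ1 : δ < 1 := lt_of_le_of_lt hδhalf (by norm_num)
  have hδε : 4 * δ * (M + 1) ≤ ε := by
    have h1 : δ ≤ ε / (4 * (M + 1)) := min_le_right _ _
    have h2 : (0:ℝ) < 4 * (M + 1) := by linarith
    calc 4 * δ * (M + 1) = δ * (4 * (M + 1)) := by ring
      _ ≤ (ε / (4 * (M + 1))) * (4 * (M + 1)) := mul_le_mul_of_nonneg_right h1 (le_of_lt h2)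
      _ = ε := by field_simp
  -- choose rationals d i and r i
  have hd : ∀ i : Fin p, ∃ dq : ℚ, δ * lam i < (dq:ℝ) ∧ (dq:ℝ) < 2 * δ * lam i := by
    intro i
    exact exists_rat_btwn (by nlinarith [hlampos i])
  choose d hd1 hd2 using hd
  have hr : ∀ i : Fin p, ∃ rq : ℚ,
      (1 - δ) * lam i - δ * lam i / (4 * (p:ℝ)) < (rq:ℝ) ∧ (rq:ℝ) < (1 - δ) * lam i := by
    intro i
    refine exists_rat_btwn ?_
    have h1 : 0 < δ * lam i / (4 * (p:ℝ)) := by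
      apply div_pos (mul_pos hδ0 (hlampos i))
      positivity
    linarith
  choose r hr1 hr2 using hr
  have hdpos : ∀ i, (0:ℝ) < (d i : ℝ) := fun i => lt_trans (mul_pos hδ0 (hlampos i)) (hd1 i)
  have hdposQ : ∀ i, 0 < d i := fun i => by exact_mod_cast hdpos i
  have hrpos : ∀ i, (0:ℝ) < (r i : ℝ) := by
    intro i
    have h1 := hr1 i
    have h2 := hlampos i
    have h3 : δ * lam i / (4 * (p:ℝ)) ≤ δ * lam i / 4 := by
      apply div_le_div_of_nonneg_left (le_of_lt (mul_pos hδ0 h2)) (by norm_num)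
      have : (1:ℝ) ≤ (p:ℝ) := by exact_mod_cast hppos
      linarith
    nlinarith
  have hrposQ : ∀ i, 0 < r i := fun i => by exact_mod_cast hrpos i
  -- definitions of A, B, S, μ, γ
  set A : ℝ := ∑ i, lam i / (d i : ℝ) with hA
  set Brat : ℚ := ∑ i, r i / d i with hBrat
  have hBcast : (Brat : ℝ) = ∑ i, (r i : ℝ) / (d i : ℝ) := by
    rw [hBrat, Rat.cast_sum]
    exact Finset.sum_congr rfl fun i _ => by push_cast; ring
  have hB0 : (0:ℝ) ≤ (Brat:ℝ) := by
    rw [hBcast]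
    exact Finset.sum_nonneg fun i _ => le_of_lt (div_pos (hrpos i) (hdpos i))
  have hB0Q : 0 ≤ Brat :=
    Finset.sum_nonneg fun i _ => le_of_lt (div_pos (hrposQ i) (hdposQ i))
  have hA0 : 0 < A :=
    Finset.sum_pos (fun i _ => div_pos (hlampos i) (hdpos i)) Finset.univ_nonempty
  set S : ℝ := A / (1 + (Brat:ℝ)) with hS
  have h1B : (0:ℝ) < 1 + (Brat:ℝ) := by linarith
  have hS0 : 0 < S := div_pos hA0 h1B
  -- the key estimate
  have hkey : (1 - δ) * A < 1 + (Brat:ℝ) := by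
    have hterm : ∀ i ∈ (univ : Finset (Fin p)),
        ((1 - δ) * lam i - (r i:ℝ)) / (d i:ℝ) < 1 / (4 * (p:ℝ)) := by
      intro i _
      rw [div_lt_div_iff₀ (hdpos i) (by positivity)]
      have h1 := hr1 i
      have h2 := hd1 i
      have h3 := hlampos i
      have h4 : δ * lam i / (4 * (p:ℝ)) * (4 * (p:ℝ)) = δ * lam i := by
        field_simp
      nlinarith
    have hsum1 : ∑ i, ((1 - δ) * lam i - (r i:ℝ)) / (d i:ℝ)
        < ∑ _i : Fin p, 1 / (4 * (p:ℝ)) :=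
      Finset.sum_lt_sum_of_nonempty Finset.univ_nonempty hterm
    have hsum2 : ∑ _i : Fin p, (1:ℝ) / (4 * (p:ℝ)) = 1/4 := by
      rw [Finset.sum_const, Finset.card_univ, Fintype.card_fin, nsmul_eq_mul]
      have hp0 : (p:ℝ) ≠ 0 := ne_of_gt hpR
      field_simp
    have hsplit : ∑ i, ((1 - δ) * lam i - (r i:ℝ)) / (d i:ℝ) = (1 - δ) * A - (Brat:ℝ) := by
      rw [hBcast, hA, Finset.mul_sum, ← Finset.sum_sub_distrib]
      exact Finset.sum_congr rfl fun i _ => by ring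
    rw [hsplit, hsum2] at hsum1
    linarith
  have hSδ : (1 - δ) * S < 1 := by
    rw [hS, ← mul_div_assoc, div_lt_one h1B]
    linarith [hkey]
  -- μ and γ
  set μ : Fin p → ℝ := fun i => (lam i - (r i:ℝ) * S) / (d i:ℝ) with hμ
  set γ : Fin p → E := fun i => (∑ j, ((r j : ℝ)) • β j) + ((d i:ℝ)) • β i with hγ
  have hμpos : ∀ i, 0 < μ i := by
    intro i
    simp only [hμ]
    refine div_pos ?_ (hdpos i)
    have e1 : (r i:ℝ) * S ≤ (1 - δ) * lam i * S :=
      mul_le_mul_of_nonneg_right (le_of_lt (hr2 i)) (le_of_lt hS0)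
    have e2 : (1 - δ) * lam i * S = lam i * ((1 - δ) * S) := by ring
    have e3 : lam i * ((1 - δ) * S) < lam i * 1 := mul_lt_mul_of_pos_left hSδ (hlampos i)
    linarith
  have hγF : ∀ i, γ i ∈ F := by
    intro i
    simp only [hγ]
    exact hFadd _ (hFsum p _ fun j => hFsmul (r j) _ (hβF j)) _ (hFsmul (d i) _ (hβF i))
  have hγU : ∀ i, γ i ∈ U := by
    intro i
    apply hball
    rw [Metric.mem_ball, dist_eq_norm]
    have hγsub : γ i - x = (∑ j, ((r j:ℝ) - lam j) • β j) + (d i:ℝ) • β i := by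
      have h1 : ∑ j, ((r j:ℝ) - lam j) • β j
          = (∑ j, (r j:ℝ) • β j) - ∑ j, lam j • β j := by
        rw [← Finset.sum_sub_distrib]
        exact Finset.sum_congr rfl fun j _ => sub_smul _ _ _
      rw [hγ, h1]
      rw [hsum]
      abel_nf; exact add_assoc _ _ _
    rw [hγsub]
    have hb1 : ‖∑ j, ((r j:ℝ) - lam j) • β j‖ ≤ 2 * δ * M := by
      calc ‖∑ j, ((r j:ℝ) - lam j) • β j‖ ≤ ∑ j, ‖((r j:ℝ) - lam j) • β j‖ :=
            norm_sum_le _ _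
        _ ≤ ∑ j, 2 * δ * (lam j * ‖β j‖) := by
            refine Finset.sum_le_sum fun j _ => ?_
            rw [norm_smul, Real.norm_eq_abs]
            have h1 := hr1 j
            have h2 := hr2 j
            have h3 := hlampos j
            have habs : |(r j:ℝ) - lam j| ≤ 2 * δ * lam j := by
              rw [abs_le]
              constructor
              · have h4 : δ * lam j / (4 * (p:ℝ)) ≤ δ * lam j := by
                  rw [div_le_iff₀ (by positivity)]
                  have hp1 : (1:ℝ) ≤ (p:ℝ) := by exact_mod_cast hppos
                  nlinarith [mul_pos hδ0 h3, hp1]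
                nlinarith
              · nlinarith
            calc |(r j:ℝ) - lam j| * ‖β j‖ ≤ (2 * δ * lam j) * ‖β j‖ :=
                  mul_le_mul_of_nonneg_right habs (norm_nonneg _)
              _ = 2 * δ * (lam j * ‖β j‖) := by ring
        _ = 2 * δ * M := by rw [hM, ← Finset.mul_sum]
    have hb2 : ‖(d i:ℝ) • β i‖ ≤ 2 * δ * M := by
      rw [norm_smul, Real.norm_eq_abs, abs_of_pos (hdpos i)]
      have h1 : lam i * ‖β i‖ ≤ M :=
        Finset.single_le_sum (fun j _ => mul_nonneg (le_of_lt (hlampos j)) (norm_nonneg _))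
          (Finset.mem_univ i)
      have h2 := hd2 i
      have h3 : (d i:ℝ) * ‖β i‖ ≤ 2 * δ * lam i * ‖β i‖ :=
        mul_le_mul_of_nonneg_right (le_of_lt h2) (norm_nonneg _)
      have h4 : 2 * δ * lam i * ‖β i‖ ≤ 2 * δ * M := by
        nlinarith [h1, hδ0]
      linarith
    calc ‖(∑ j, ((r j:ℝ) - lam j) • β j) + (d i:ℝ) • β i‖
        ≤ ‖∑ j, ((r j:ℝ) - lam j) • β j‖ + ‖(d i:ℝ) • β i‖ := norm_add_le _ _
      _ ≤ 4 * δ * M := by linarith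
      _ < 4 * δ * (M + 1) := by nlinarith
      _ ≤ ε := hδε
  -- the sum identity
  have hSB : S * (1 + (Brat:ℝ)) = A := by
    rw [hS]
    field_simp
  have hSμ : ∑ i, μ i = S := by
    have h1 : ∑ i, μ i = A - S * (Brat:ℝ) := by
      rw [hμ, hA, hBcast, Finset.mul_sum, ← Finset.sum_sub_distrib]
      refine Finset.sum_congr rfl fun i _ => ?_
      have := hdpos i
      field_simp
    rw [h1]
    linarith [hSB]
  have hcoef : ∀ j, S * (r j:ℝ) + μ j * (d j:ℝ) = lam j := by
    intro j
    rw [hμ]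
    have := hdpos j
    field_simp
    ring
  have hxsum : x = ∑ i, μ i • γ i := by
    have step1 : ∑ i, μ i • γ i
        = (∑ i, μ i) • (∑ j, ((r j:ℝ)) • β j) + ∑ i, (μ i * (d i:ℝ)) • β i := by
      simp only [hγ, smul_add, smul_smul]
      rw [Finset.sum_add_distrib, ← Finset.sum_smul]
    rw [step1, hSμ, Finset.smul_sum]
    have step2 : ∑ j, S • (((r j:ℝ)) • β j) = ∑ j, (S * (r j:ℝ)) • β j :=
      Finset.sum_congr rfl fun j _ => smul_smul _ _ _
    rw [step2, ← Finset.sum_add_distrib]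
    rw [hsum]
    refine Finset.sum_congr rfl fun j _ => ?_
    rw [← add_smul, hcoef j]
  -- Q-independence of γ
  have Qγ : ∀ qq : Fin p → ℚ, (∑ i, (qq i : ℝ) • γ i) = 0 → qq = 0 := by
    intro qq hrel
    set Q : ℚ := ∑ i, qq i with hQ
    have hcast : ((Q:ℚ):ℝ) = ∑ i, ((qq i : ℝ)) := by
      rw [hQ, Rat.cast_sum]
    have hrel2 : ∑ j, (((Q * r j + qq j * d j : ℚ)):ℝ) • β j = 0 := by
      have expand : ∑ i, (qq i : ℝ) • γ i
          = (∑ i, (qq i:ℝ)) • (∑ j, ((r j:ℝ)) • β j) + ∑ i, ((qq i:ℝ) * (d i:ℝ)) • β i := by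
        simp only [hγ, smul_add, smul_smul]
        rw [Finset.sum_add_distrib, ← Finset.sum_smul]
      rw [expand] at hrel
      rw [← hrel]
      rw [Finset.smul_sum, ← Finset.sum_add_distrib]
      refine Finset.sum_congr rfl fun j _ => ?_
      rw [smul_smul, ← add_smul, ← hcast]
      push_cast
      ring_nf
    have hq0 : (fun j => Q * r j + qq j * d j) = 0 := Qβ _ hrel2
    have hqj : ∀ j, Q * r j + qq j * d j = 0 := fun j => congrFun hq0 j
    have hQ0 : Q = 0 := by
      have e1 : Q * Brat = ∑ j, -qq j := by
        rw [hBrat, Finset.mul_sum]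
        refine Finset.sum_congr rfl fun j _ => ?_
        have h3 := hqj j
        have hd := hdposQ j
        field_simp
        linarith
      have e2 : Q * Brat = -Q := by
        rw [e1, hQ]
        exact Finset.sum_neg_distrib (f := qq)
      have h6 : Q * (1 + Brat) = 0 := by
        have : Q * (1 + Brat) = Q + Q * Brat := by ring
        rw [this, e2]
        ring
      have h7 : (0:ℚ) < 1 + Brat := by linarith [hB0Q]
      exact (mul_eq_zero.mp h6).resolve_right (ne_of_gt h7)
    funext j
    have h3 := hqj j
    rw [hQ0, zero_mul, zero_add] at h3
    have h4 := hdposQ j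
    have := (mul_eq_zero.mp h3).resolve_right (ne_of_gt h4)
    simpa using this
  -- Q-independence of μ
  have Qμ : ∀ qq : Fin p → ℚ, (∑ i, (qq i : ℝ) * μ i) = 0 → qq = 0 := by
    intro qq hrel
    set Trat : ℚ := ∑ i, qq i * r i / d i with hTrat
    have hTcast : (Trat:ℝ) = ∑ i, (qq i:ℝ) * (r i:ℝ) / (d i:ℝ) := by
      rw [hTrat, Rat.cast_sum]
      exact Finset.sum_congr rfl fun i _ => by push_cast; ring
    have h1 : ∑ i, ((qq i:ℝ) / (d i:ℝ)) * lam i = S * (Trat:ℝ) := by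
      have expand : ∀ i, (qq i:ℝ) * μ i
          = ((qq i:ℝ) / (d i:ℝ)) * lam i - S * ((qq i:ℝ) * (r i:ℝ) / (d i:ℝ)) := by
        intro i
        rw [hμ]
        have := hdpos i
        field_simp
      have h2 : (0:ℝ) = ∑ i, (((qq i:ℝ) / (d i:ℝ)) * lam i
          - S * ((qq i:ℝ) * (r i:ℝ) / (d i:ℝ))) := by
        rw [← Finset.sum_congr rfl fun i _ => expand i]
        exact hrel.symm
      rw [Finset.sum_sub_distrib, ← Finset.mul_sum, ← hTcast] at h2
      linarith
    have hrel2 : ∑ i, ((((1 + Brat) * qq i / d i - Trat / d i : ℚ)):ℝ) * lam i = 0 := by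
      have expand2 : ∀ i, ((((1 + Brat) * qq i / d i - Trat / d i : ℚ)):ℝ) * lam i
          = (1 + (Brat:ℝ)) * (((qq i:ℝ) / (d i:ℝ)) * lam i) - (Trat:ℝ) * (lam i / (d i:ℝ)) := by
        intro i
        push_cast
        have : (d i : ℝ) ≠ 0 := ne_of_gt (hdpos i)
        field_simp
      rw [Finset.sum_congr rfl fun i _ => expand2 i]
      rw [Finset.sum_sub_distrib, ← Finset.mul_sum, ← Finset.mul_sum, h1, ← hA]
      have : (1 + (Brat:ℝ)) * (S * (Trat:ℝ)) = A * (Trat:ℝ) := by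
        rw [← hSB]; ring
      rw [this]
      ring
    have hq0 := Qlam _ hrel2
    have hqj : ∀ i, (1 + Brat) * qq i / d i - Trat / d i = 0 := fun i => congrFun hq0 i
    have hqj2 : ∀ i, (1 + Brat) * qq i = Trat := by
      intro i
      have h3 := hqj i
      have h4 := hdposQ i
      field_simp at h3
      linarith
    have h7 : (0:ℚ) < 1 + Brat := by linarith [hB0Q]
    have hT0 : Trat = 0 := by
      have e1 : (1 + Brat) * Trat = Trat * Brat := by
        calc (1 + Brat) * Trat = ∑ i, (1 + Brat) * (qq i * r i / d i) := by
              rw [hTrat, Finset.mul_sum]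
          _ = ∑ i, Trat * (r i / d i) := by
              refine Finset.sum_congr rfl fun i _ => ?_
              rw [← hqj2 i]
              ring
          _ = Trat * Brat := by rw [hBrat, Finset.mul_sum]
      ring_nf at e1
      linarith
    funext i
    have := hqj2 i
    rw [hT0] at this
    have h9 : qq i = 0 := by
      have := mul_eq_zero.mp this
      rcases this with h | h
      · exact absurd h (ne_of_gt h7)
      · exact h
    simpa using h9
  exact ⟨p, γ, μ, fun i => ⟨hγF i, hγU i⟩, hμpos, hxsum, Qγ, Qμ⟩
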